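/- Let A be a real symmetric positive definite 6×6 matrix with 3×3-block decomposition A = [[A_yy, A_yz],[A_zy, A_zz]], let J = diag(2^{−1/2}, 2^{−1/2}, 1), let B be the 6×3 matrix whose upper 3×3 block is O₃ and whose lower 3×3 block is J, let 𝒴(ζ) be the 6×6 matrix with block form [[I₃, −2^{1/2} ζ · I₃],[O₃, O₃]], and let 𝒳(ζ) = J⁻¹ A_zz⁻¹ A_zy · ( −ζ·I₃ | 2^{1/2}(ζ²/2 − 1/24)·I₃ ). Then for every ζ ∈ ℝ the 6×6 matrix A · (B · 𝒳′(ζ) + 𝒴(ζ)) has the block form [[A⁰ · ( I₃ | −2^{1/2} ζ · I₃ )],[O_{3×6}]]; that is, its lower three rows vanish identically and its upper 3×6 block equals A⁰ · ( I₃ | −2^{1/2} ζ · I₃ ), where A⁰ = A_yy − A_yz · A_zz⁻¹ · A_zy. -/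

import Mathlib

/- STATEMENT 2: For a real symmetric positive definite 6×6 matrix A, with
J = diag(2^{−1/2}, 2^{−1/2}, 1), B the 6×3 matrix with upper block O₃ and lower block J,
𝒴(ζ) = [[I₃, −2^{1/2} ζ I₃],[O₃, O₃]] and
𝒳(ζ) = J⁻¹ A_zz⁻¹ A_zy ( −ζ I₃ | 2^{1/2}(ζ²/2 − 1/24) I₃ ),
the matrix A · (B · 𝒳′(ζ) + 𝒴(ζ)) has lower three rows zero and upper 3×6 block equal to
A⁰ · ( I₃ | −2^{1/2} ζ I₃ ), where A⁰ = A_yy − A_yz A_zz⁻¹ A_zy. -/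

open Matrix

noncomputable section

def lo3 : Fin 3 → Fin 6 := fun i => ⟨i, by omega⟩
def hi3 : Fin 3 → Fin 6 := fun i => ⟨i + 3, by omega⟩

def Ayy (A : Matrix (Fin 6) (Fin 6) ℝ) : Matrix (Fin 3) (Fin 3) ℝ := A.submatrix lo3 lo3
def Ayz (A : Matrix (Fin 6) (Fin 6) ℝ) : Matrix (Fin 3) (Fin 3) ℝ := A.submatrix lo3 hi3
def Azy (A : Matrix (Fin 6) (Fin 6) ℝ) : Matrix (Fin 3) (Fin 3) ℝ := A.submatrix hi3 lo3
def Azz (A : Matrix (Fin 6) (Fin 6) ℝ) : Matrix (Fin 3) (Fin 3) ℝ := A.submatrix hi3 hi3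

/-- The Schur complement A⁰ = A_yy − A_yz · A_zz⁻¹ · A_zy. -/
def A0 (A : Matrix (Fin 6) (Fin 6) ℝ) : Matrix (Fin 3) (Fin 3) ℝ :=
  Ayy A - Ayz A * (Azz A)⁻¹ * Azy A

/-- The diagonal matrix J = diag(2^{−1/2}, 2^{−1/2}, 1). -/
def Jmat : Matrix (Fin 3) (Fin 3) ℝ :=
  Matrix.diagonal ![(Real.sqrt 2)⁻¹, (Real.sqrt 2)⁻¹, 1]

/-- Horizontal concatenation ( M | N ) of two 3×3 blocks into a 3×6 matrix. -/
def hcat (M N : Matrix (Fin 3) (Fin 3) ℝ) : Matrix (Fin 3) (Fin 6) ℝ :=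
  Matrix.of fun i j =>
    if h : (j : ℕ) < 3 then M i ⟨j, h⟩ else N i ⟨(j : ℕ) - 3, by omega⟩

/-- Vertical concatenation of two 3×3 blocks into a 6×3 matrix. -/
def vcat (M N : Matrix (Fin 3) (Fin 3) ℝ) : Matrix (Fin 6) (Fin 3) ℝ :=
  Matrix.of fun i j =>
    if h : (i : ℕ) < 3 then M ⟨i, h⟩ j else N ⟨(i : ℕ) - 3, by omega⟩ j

/-- Vertical stacking of two 3×6 blocks into a 6×6 matrix. -/
def vstack (M N : Matrix (Fin 3) (Fin 6) ℝ) : Matrix (Fin 6) (Fin 6) ℝ :=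
  Matrix.of fun i j =>
    if h : (i : ℕ) < 3 then M ⟨i, h⟩ j else N ⟨(i : ℕ) - 3, by omega⟩ j

/-- The 6×3 matrix B with upper block O₃ and lower block J. -/
def Bmat : Matrix (Fin 6) (Fin 3) ℝ := vcat 0 Jmat

/-- The 6×6 matrix 𝒴(ζ) = [[I₃, −2^{1/2} ζ I₃],[O₃, O₃]]. -/
def Ymat (ζ : ℝ) : Matrix (Fin 6) (Fin 6) ℝ :=
  vstack (hcat (1 : Matrix (Fin 3) (Fin 3) ℝ)
      ((-(Real.sqrt 2) * ζ) • (1 : Matrix (Fin 3) (Fin 3) ℝ))) 0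

/-- 𝒳(ζ) = J⁻¹ A_zz⁻¹ A_zy · ( −ζ·I₃ | 2^{1/2}(ζ²/2 − 1/24)·I₃ ). -/
def Xmat (A : Matrix (Fin 6) (Fin 6) ℝ) (ζ : ℝ) : Matrix (Fin 3) (Fin 6) ℝ :=
  Jmat⁻¹ * (Azz A)⁻¹ * Azy A *
    hcat ((-ζ) • (1 : Matrix (Fin 3) (Fin 3) ℝ))
      ((Real.sqrt 2 * (ζ ^ 2 / 2 - 1 / 24)) • (1 : Matrix (Fin 3) (Fin 3) ℝ))

/-- Entrywise derivative 𝒳′(ζ). -/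
def Xd (A : Matrix (Fin 6) (Fin 6) ℝ) (ζ : ℝ) : Matrix (Fin 3) (Fin 6) ℝ :=
  Matrix.of fun i j => deriv (fun t => Xmat A t i j) ζ

section Aux

open Matrix

lemma val3 : ((3 : Fin 6) : ℕ) = 3 := rfl
lemma val4 : ((4 : Fin 6) : ℕ) = 4 := rfl
lemma val5 : ((5 : Fin 6) : ℕ) = 5 := rfl
lemma mk0 : (⟨0, by omega⟩ : Fin 3) = 0 := rfl
lemma mk1 : (⟨1, by omega⟩ : Fin 3) = 1 := rfl
lemma mk2 : (⟨2, by omega⟩ : Fin 3) = 2 := rfl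

/-- entry of `M * hcat (a•1) (b•1)`. -/
lemma mul_hcat_smul (M : Matrix (Fin 3) (Fin 3) ℝ) (a b : ℝ) :
    M * hcat (a • (1 : Matrix (Fin 3) (Fin 3) ℝ)) (b • (1 : Matrix (Fin 3) (Fin 3) ℝ)) =
      hcat (a • M) (b • M) := by
  funext i j
  by_cases h : (j : ℕ) < 3 <;>
  · simp only [Matrix.mul_apply, hcat, Matrix.of_apply, h, dif_pos, dif_neg, not_false_iff,
      Matrix.smul_apply, Matrix.one_apply, smul_eq_mul, mul_ite, mul_zero, mul_one]
    rw [Finset.sum_ite_eq']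
    simp [mul_comm]

lemma vcat_mul (M N : Matrix (Fin 3) (Fin 3) ℝ) (P : Matrix (Fin 3) (Fin 6) ℝ) :
    vcat M N * P = vstack (M * P) (N * P) := by
  funext i j
  by_cases h : (i : ℕ) < 3 <;>
    simp [Matrix.mul_apply, vcat, vstack, h]

lemma vstack_add (M N P Q : Matrix (Fin 3) (Fin 6) ℝ) :
    vstack M N + vstack P Q = vstack (M + P) (N + Q) := by
  funext i j
  by_cases h : (i : ℕ) < 3 <;> simp [vstack, h]

lemma mul_vstack (A : Matrix (Fin 6) (Fin 6) ℝ) (M N : Matrix (Fin 3) (Fin 6) ℝ) :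
    A * vstack M N = vstack (Ayy A * M + Ayz A * N) (Azy A * M + Azz A * N) := by
  funext i j
  by_cases h : (i : ℕ) < 3 <;>
    [skip; rw [show i = ⟨(i : ℕ) - 3 + 3, by omega⟩ from Fin.ext (by simp only [Fin.val_mk]; omega)]] <;>
  · simp [Matrix.mul_apply, vstack, h, Ayy, Ayz, Azy, Azz, lo3, hi3,
      Fin.sum_univ_six, Fin.sum_univ_three, val3, val4, val5, mk0, mk1, mk2]
    ring

end Aux

section Aux2
open Matrix

lemma hi30 : hi3 0 = 3 := rfl
lemma hi31 : hi3 1 = 4 := rfl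
lemma hi32 : hi3 2 = 5 := rfl

lemma Xd_eq (A : Matrix (Fin 6) (Fin 6) ℝ) (ζ : ℝ) :
    Xd A ζ = Jmat⁻¹ * (Azz A)⁻¹ * Azy A *
      hcat ((-1 : ℝ) • (1 : Matrix (Fin 3) (Fin 3) ℝ))
        ((Real.sqrt 2 * ζ) • (1 : Matrix (Fin 3) (Fin 3) ℝ)) := by
  set C := Jmat⁻¹ * (Azz A)⁻¹ * Azy A with hCdef
  have hC : ∀ t : ℝ, Xmat A t =
      hcat ((-t) • C) ((Real.sqrt 2 * (t ^ 2 / 2 - 1 / 24)) • C) := by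
    intro t
    simp only [Xmat, ← hCdef, mul_hcat_smul]
  funext i j
  simp only [Xd, Matrix.of_apply]
  rw [mul_hcat_smul]
  by_cases h : (j : ℕ) < 3
  · have hfun : (fun t => Xmat A t i j) = fun t => -t * C i ⟨(j : ℕ), h⟩ := by
      funext t
      rw [hC t]
      simp [hcat, h]
    rw [hfun]
    simp only [hcat, Matrix.of_apply, dif_pos h, Matrix.smul_apply, smul_eq_mul]
    exact ((hasDerivAt_id ζ).neg.mul_const _).deriv
  · have hfun : (fun t => Xmat A t i j) =
        fun t => Real.sqrt 2 * (t ^ 2 / 2 - 1 / 24) * C i ⟨(j : ℕ) - 3, by omega⟩ := by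
      funext t
      rw [hC t]
      simp [hcat, h]
    rw [hfun]
    simp only [hcat, Matrix.of_apply, dif_neg h, Matrix.smul_apply, smul_eq_mul]
    have hd : HasDerivAt
        (fun t : ℝ => Real.sqrt 2 * (t ^ 2 / 2 - 1 / 24) * C i ⟨(j : ℕ) - 3, by omega⟩)
        (Real.sqrt 2 * (2 * ζ ^ 1 / 2) * C i ⟨(j : ℕ) - 3, by omega⟩) ζ :=
      ((((hasDerivAt_pow 2 ζ).div_const 2).sub_const (1 / 24)).const_mul (Real.sqrt 2)).mul_const _
    rw [hd.deriv]
    ring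

lemma Azz_posDef (A : Matrix (Fin 6) (Fin 6) ℝ) (hA : A.PosDef) : (Azz A).PosDef := by
  refine Matrix.PosDef.of_dotProduct_mulVec_pos (hA.posSemidef.submatrix hi3).1 (fun x hx => ?_)
  set y : Fin 6 → ℝ := fun j => if h : (j : ℕ) < 3 then 0 else x ⟨(j : ℕ) - 3, by omega⟩ with hy
  have hyne : y ≠ 0 := by
    intro h0
    apply hx
    funext i
    have h1 := congrFun h0 (hi3 i)
    have h2 : ¬ ((i : ℕ) + 3 < 3) := by omega
    simpa [hy, hi3, h2] using h1
  have key : star x ⬝ᵥ Azz A *ᵥ x = star y ⬝ᵥ A *ᵥ y := by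
    simp only [dotProduct, mulVec, Fin.sum_univ_three, Fin.sum_univ_six, hy, Azz,
      Matrix.submatrix_apply, hi30, hi31, hi32, Pi.star_apply, star_trivial]
    norm_num [val3, val4, val5, mk0, mk1, mk2]
  rw [key]
  exact hA.dotProduct_mulVec_pos hyne

end Aux2

theorem stress_block_structure (A : Matrix (Fin 6) (Fin 6) ℝ) (hA : A.PosDef) :
    ∀ ζ : ℝ,
      A * (Bmat * Xd A ζ + Ymat ζ) =
        vstack
          (A0 A * hcat (1 : Matrix (Fin 3) (Fin 3) ℝ)
            ((-(Real.sqrt 2) * ζ) • (1 : Matrix (Fin 3) (Fin 3) ℝ)))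
          0 := by
  intro ζ
  set H : Matrix (Fin 3) (Fin 6) ℝ :=
    hcat (1 : Matrix (Fin 3) (Fin 3) ℝ)
      ((-(Real.sqrt 2) * ζ) • (1 : Matrix (Fin 3) (Fin 3) ℝ)) with hH
  have hAzz : Azz A * (Azz A)⁻¹ = 1 :=
    Matrix.mul_nonsing_inv _ (isUnit_iff_ne_zero.mpr (Azz_posDef A hA).det_pos.ne')
  have hJdet : Jmat.det ≠ 0 := by
    have h2 : Real.sqrt 2 ≠ 0 := by positivity
    simp [Jmat, Matrix.det_diagonal, Fin.prod_univ_three, h2]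
  have hJ : Jmat * Jmat⁻¹ = 1 := Matrix.mul_nonsing_inv _ (isUnit_iff_ne_zero.mpr hJdet)
  have hneg : hcat ((-1 : ℝ) • (1 : Matrix (Fin 3) (Fin 3) ℝ))
      ((Real.sqrt 2 * ζ) • (1 : Matrix (Fin 3) (Fin 3) ℝ)) = -H := by
    funext i j
    by_cases h : (j : ℕ) < 3 <;> simp [hH, hcat, h]
  have hXd : Xd A ζ = Jmat⁻¹ * ((Azz A)⁻¹ * (Azy A * (-H))) := by
    rw [Xd_eq, hneg]
    simp only [Matrix.mul_assoc]
  have h1 : Bmat * Xd A ζ = vstack 0 ((Azz A)⁻¹ * (Azy A * (-H))) := by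
    rw [Bmat, vcat_mul, Matrix.zero_mul, hXd, ← Matrix.mul_assoc Jmat, hJ, Matrix.one_mul]
  have h2 : Ymat ζ = vstack H 0 := rfl
  have hup : Ayy A * H + Ayz A * ((Azz A)⁻¹ * (Azy A * (-H))) = A0 A * H := by
    rw [A0, Matrix.sub_mul, sub_eq_add_neg]
    congr 1
    simp [Matrix.mul_neg, Matrix.mul_assoc]
  have hlow : Azy A * H + Azz A * ((Azz A)⁻¹ * (Azy A * (-H))) = 0 := by
    rw [← Matrix.mul_assoc (Azz A), hAzz, Matrix.one_mul, Matrix.mul_neg, add_neg_cancel]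
  rw [h1, h2, vstack_add, zero_add, add_zero, mul_vstack, hup, hlow]
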